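/- Let z > 0 be real and let w₁, w₂ ∈ ℂ be such that ν = (w₁ − w₂)/z is not an integer. If I: (0,∞) → ℂ is twice differentiable and satisfies z²q²I''(q) + z²qI'(q) − (w₁+w₂)zqI'(q) + w₁w₂I(q) = qI(q) for all q > 0, then there exist constants c₁, c₂ ∈ ℂ such that I(q) = q^{(w₁+w₂)/(2z)}·(c₁·I_{ν}(2√q/z) + c₂·I_{−ν}(2√q/z)) for all q > 0. -/

import Mathlib

open Complex Set Filter

/-- The modified Bessel function of the first kind `I_α(x)`, for `α ∈ ℂ` and real `x`,
defined via its power series; terms where `Γ` hits a pole vanish since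
Mathlib's `Complex.Gamma` is `0` at the poles (so `1/Γ = 0` there). -/
noncomputable def besselI (α : ℂ) (x : ℝ) : ℂ :=
  ∑' m : ℕ, (1 / ((Nat.factorial m : ℂ) * Complex.Gamma ((m : ℂ) + α + 1))) *
    (((x : ℂ) / 2) ^ (2 * (m : ℂ) + α))

noncomputable def bc (α : ℂ) (m : ℕ) : ℂ :=
  1 / ((Nat.factorial m : ℂ) * Complex.Gamma ((m : ℂ) + α + 1))

lemma arg_ne {α : ℂ} (hα : ∀ n : ℤ, α ≠ (n : ℂ)) (m : ℕ) : (m : ℂ) + α + 1 ≠ 0 := by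
  intro h
  exact hα (-(m+1)) (by push_cast; linear_combination h)

lemma gamma_ne {α : ℂ} (hα : ∀ n : ℤ, α ≠ (n : ℂ)) (m : ℕ) :
    Complex.Gamma ((m : ℂ) + α + 1) ≠ 0 := by
  apply Complex.Gamma_ne_zero
  intro k hk
  exact hα (-(k : ℤ) - m - 1) (by push_cast; linear_combination hk)

lemma fac_gamma_ne {α : ℂ} (hα : ∀ n : ℤ, α ≠ (n : ℂ)) (m : ℕ) :
    (Nat.factorial m : ℂ) * Complex.Gamma ((m : ℂ) + α + 1) ≠ 0 :=
  mul_ne_zero (Nat.cast_ne_zero.2 (Nat.factorial_ne_zero m)) (gamma_ne hα m)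

lemma bc_ne {α : ℂ} (hα : ∀ n : ℤ, α ≠ (n : ℂ)) (m : ℕ) : bc α m ≠ 0 :=
  one_div_ne_zero (fac_gamma_ne hα m)

lemma bc_rec {α : ℂ} (hα : ∀ n : ℤ, α ≠ (n : ℂ)) (m : ℕ) :
    bc α m = ((m : ℂ) + 1) * ((m : ℂ) + α + 1) * bc α (m + 1) := by
  have hg : Complex.Gamma (((m+1 : ℕ) : ℂ) + α + 1) =
      ((m : ℂ) + α + 1) * Complex.Gamma ((m : ℂ) + α + 1) := by
    have h : (((m+1 : ℕ) : ℂ)) + α + 1 = ((m : ℂ) + α + 1) + 1 := by push_cast; ring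
    rw [h, Complex.Gamma_add_one _ (arg_ne hα m)]
  have hf : ((Nat.factorial (m+1) : ℂ)) = ((m : ℂ) + 1) * (Nat.factorial m : ℂ) := by
    rw [Nat.factorial_succ]; push_cast; ring
  have h1 : ((m : ℂ) + 1) ≠ 0 := Nat.cast_add_one_ne_zero m
  have h2 : ((m : ℂ) + 1) * (Nat.factorial m : ℂ) * (((m : ℂ) + α + 1) *
      Complex.Gamma ((m : ℂ) + α + 1)) ≠ 0 :=
    mul_ne_zero (mul_ne_zero h1 (Nat.cast_ne_zero.2 (Nat.factorial_ne_zero m)))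
      (mul_ne_zero (arg_ne hα m) (gamma_ne hα m))
  rw [bc, bc, hg, hf, mul_one_div, div_eq_div_iff (fac_gamma_ne hα m) h2]
  ring


lemma norm_m_add_one (m : ℕ) : ‖(m : ℂ) + 1‖ = (m : ℝ) + 1 := by
  have h : ((m : ℂ) + 1) = ((m + 1 : ℕ) : ℂ) := by push_cast; ring
  rw [h, Complex.norm_natCast]; push_cast; ring

lemma norm_lower (α : ℂ) (m : ℕ) : (m : ℝ) + 1 - ‖α‖ ≤ ‖(m : ℂ) + α + 1‖ := by
  have h := norm_add_le ((m : ℂ) + α + 1) (-α)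
  have h2 : ((m : ℂ) + α + 1) + (-α) = (m : ℂ) + 1 := by ring
  rw [h2, norm_m_add_one, norm_neg] at h
  linarith

lemma bc_summable {α : ℂ} (hrec : ∀ m : ℕ, bc α m = ((m : ℂ) + 1) * ((m : ℂ) + α + 1) * bc α (m + 1))
    (R : ℝ) (hR : 0 ≤ R) :
    Summable (fun m : ℕ => ‖bc α m‖ * ((m : ℝ) + 1) ^ 2 * R ^ m) := by
  apply summable_of_ratio_norm_eventually_le (r := 1/2) (by norm_num)
  have hM : ∀ᶠ m : ℕ in atTop, ‖α‖ + 8 * R + 8 ≤ (m : ℝ) := by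
    have := tendsto_natCast_atTop_atTop (R := ℝ)
    exact this.eventually_ge_atTop _
  filter_upwards [hM] with m hm
  have hb1 : (0:ℝ) ≤ ‖bc α (m+1)‖ * ((m:ℝ) + 1 + 1) ^ 2 * R ^ (m+1) := by positivity
  have hb2 : (0:ℝ) ≤ ‖bc α m‖ * ((m:ℝ) + 1) ^ 2 * R ^ m := by positivity
  rw [Real.norm_of_nonneg (by push_cast; exact_mod_cast hb1), Real.norm_of_nonneg hb2]
  have hval : ‖bc α m‖ = ((m:ℝ) + 1) * ‖(m : ℂ) + α + 1‖ * ‖bc α (m+1)‖ := by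
    rw [hrec m, norm_mul, norm_mul, norm_m_add_one]
  have hlow := norm_lower α m
  have hb : (0:ℝ) ≤ ‖bc α (m+1)‖ := norm_nonneg _
  have hRm : (0:ℝ) ≤ R ^ m := pow_nonneg hR m
  have hRe : R ^ (m+1) = R * R ^ m := by ring
  have hna : (0:ℝ) ≤ ‖α‖ := norm_nonneg _
  push_cast
  rw [hval, hRe]
  have key : 8 * R ≤ ((m:ℝ)+1) * ‖(m : ℂ) + α + 1‖ := by nlinarith
  have hfour : ((m:ℝ)+1+1)^2 ≤ 4*((m:ℝ)+1)^2 := by nlinarith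
  nlinarith [mul_le_mul_of_nonneg_right hfour (mul_nonneg (mul_nonneg hb hRm) hR),
    mul_le_mul_of_nonneg_right key (mul_nonneg (mul_nonneg hb hRm) (sq_nonneg ((m:ℝ)+1)))]


lemma hasDerivAt_cpow_real (s : ℂ) {x : ℝ} (hx : 0 < x) :
    HasDerivAt (fun y : ℝ => (y : ℂ) ^ s) (s * (x : ℂ) ^ (s - 1)) x := by
  have hlog : HasDerivAt (fun y : ℝ => Real.log y) x⁻¹ x := Real.hasDerivAt_log (ne_of_gt hx)
  have h1 : HasDerivAt (fun y : ℝ => ((Real.log y : ℝ) : ℂ)) ((x⁻¹ : ℝ) : ℂ) x :=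
    hlog.ofReal_comp
  have h2 : HasDerivAt (fun y : ℝ => ((Real.log y : ℝ) : ℂ) * s) (((x⁻¹ : ℝ) : ℂ) * s) x :=
    h1.mul_const s
  have h3 : HasDerivAt (fun y : ℝ => Complex.exp (((Real.log y : ℝ) : ℂ) * s))
      (Complex.exp (((Real.log x : ℝ) : ℂ) * s) * (((x⁻¹ : ℝ) : ℂ) * s)) x := h2.cexp
  have heq : (fun y : ℝ => (y : ℂ) ^ s) =ᶠ[nhds x] fun y : ℝ =>
      Complex.exp (((Real.log y : ℝ) : ℂ) * s) := by
    filter_upwards [eventually_gt_nhds hx] with y hy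
    rw [Complex.cpow_def_of_ne_zero (by exact_mod_cast (ne_of_gt hy)),
      Complex.ofReal_log (le_of_lt hy)]
  have h4 := h3.congr_of_eventuallyEq heq
  refine h4.congr_deriv (Eq.symm ?_)
  rw [Complex.ofReal_log (le_of_lt hx), ← Complex.cpow_def_of_ne_zero
    (by exact_mod_cast (ne_of_gt hx))]
  rw [Complex.cpow_sub _ _ (by exact_mod_cast (ne_of_gt hx)), Complex.cpow_one]
  have : ((x:ℝ):ℂ) ≠ 0 := by exact_mod_cast (ne_of_gt hx)
  field_simp
  push_cast; field_simp


lemma norm_cpow_real {q : ℝ} (hq : 0 < q) (s : ℂ) : ‖(q : ℂ) ^ s‖ = q ^ s.re := by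
  rw [Complex.norm_cpow_eq_rpow_re_of_pos hq]

lemma re_nat_add (m : ℕ) (c : ℂ) : ((m : ℂ) + c).re = (m : ℝ) + c.re := by
  simp

lemma rpow_nat_add {q : ℝ} (hq : 0 < q) (m : ℕ) (c : ℝ) :
    q ^ ((m : ℝ) + c) = q ^ m * q ^ c := by
  rw [Real.rpow_add hq, Real.rpow_natCast]

lemma coeff_le (b : ℂ) (m : ℕ) : ‖(m : ℂ) + b‖ ≤ ((m : ℝ) + 1) * (1 + ‖b‖) := by
  have h := norm_add_le ((m : ℂ)) b
  rw [Complex.norm_natCast] at h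
  have : (0:ℝ) ≤ (m : ℝ) := Nat.cast_nonneg m
  nlinarith [norm_nonneg b]

lemma summable_shape (e : ℕ → ℂ)
    (He : ∀ R : ℝ, 0 ≤ R → Summable (fun m : ℕ => ‖e m‖ * ((m : ℝ) + 1) ^ 2 * R ^ m))
    (p : ℕ → ℂ) (Kp : ℝ) (hp : ∀ m, ‖p m‖ ≤ Kp * ((m : ℝ) + 1) ^ 2) (c : ℂ) {q : ℝ}
    (hq : 0 < q) : Summable (fun m : ℕ => e m * (p m * (q : ℂ) ^ ((m : ℂ) + c))) := by
  apply Summable.of_norm_bounded (((He q hq.le).mul_left (Kp * q ^ c.re)))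
  intro m
  rw [norm_mul, norm_mul, norm_cpow_real hq, re_nat_add, rpow_nat_add hq]
  have h1 : ‖p m‖ * (q ^ m * q ^ c.re) ≤ (Kp * ((m:ℝ)+1)^2) * (q ^ m * q ^ c.re) := by
    apply mul_le_mul_of_nonneg_right (hp m); positivity
  calc ‖e m‖ * (‖p m‖ * (q ^ m * q ^ c.re))
      ≤ ‖e m‖ * ((Kp * ((m:ℝ)+1)^2) * (q ^ m * q ^ c.re)) := by
        apply mul_le_mul_of_nonneg_left h1 (norm_nonneg _)
    _ = Kp * q ^ c.re * (‖e m‖ * ((m:ℝ)+1)^2 * q ^ m) := by ring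

lemma bound_shape (e : ℕ → ℂ) (p : ℕ → ℂ) (Kp : ℝ) (hKp : 0 ≤ Kp)
    (hp : ∀ m, ‖p m‖ ≤ Kp * ((m : ℝ) + 1) ^ 2) (c : ℂ) {δ R y : ℝ} (hδ : 0 < δ)
    (hy : y ∈ Set.Ioo δ R) (m : ℕ) :
    ‖e m * (p m * (y : ℂ) ^ ((m : ℂ) + c))‖ ≤
      (Kp * max (δ ^ c.re) (R ^ c.re)) * (‖e m‖ * ((m : ℝ) + 1) ^ 2 * R ^ m) := by
  have hy0 : 0 < y := lt_trans hδ hy.1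
  rw [norm_mul, norm_mul, norm_cpow_real hy0, re_nat_add, rpow_nat_add hy0]
  have hym : y ^ m ≤ R ^ m := pow_le_pow_left₀ hy0.le hy.2.le m
  have hyc : y ^ c.re ≤ max (δ ^ c.re) (R ^ c.re) := by
    rcases le_or_gt 0 c.re with h | h
    · exact le_max_of_le_right (Real.rpow_le_rpow hy0.le hy.2.le h)
    · exact le_max_of_le_left (Real.rpow_le_rpow_of_nonpos hδ hy.1.le h.le)
  have h1 : ‖p m‖ * (y ^ m * y ^ c.re) ≤
      (Kp * ((m:ℝ)+1)^2) * (R ^ m * max (δ ^ c.re) (R ^ c.re)) := by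
    apply mul_le_mul (hp m) _ (by positivity) (by positivity)
    exact mul_le_mul hym hyc (Real.rpow_nonneg hy0.le _) (pow_nonneg (le_trans hy0.le hy.2.le) m)
  calc ‖e m‖ * (‖p m‖ * (y ^ m * y ^ c.re))
      ≤ ‖e m‖ * ((Kp * ((m:ℝ)+1)^2) * (R ^ m * max (δ ^ c.re) (R ^ c.re))) :=
        mul_le_mul_of_nonneg_left h1 (norm_nonneg _)
    _ = (Kp * max (δ ^ c.re) (R ^ c.re)) * (‖e m‖ * ((m : ℝ) + 1) ^ 2 * R ^ m) := by ring


lemma hasDerivAt_tsum_shape (e : ℕ → ℂ)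
    (He : ∀ R : ℝ, 0 ≤ R → Summable (fun m : ℕ => ‖e m‖ * ((m : ℝ) + 1) ^ 2 * R ^ m))
    (c : ℂ) (p p' : ℕ → ℂ) (Kp Kp' : ℝ) (hKp : 0 ≤ Kp) (hKp' : 0 ≤ Kp')
    (hp : ∀ m, ‖p m‖ ≤ Kp * ((m : ℝ) + 1) ^ 2)
    (hp' : ∀ m, ‖p' m‖ ≤ Kp' * ((m : ℝ) + 1) ^ 2)
    (hrel : ∀ m, p' m = p m * ((m : ℂ) + c)) {q : ℝ} (hq : 0 < q) :
    HasDerivAt (fun y : ℝ => ∑' m, e m * (p m * (y : ℂ) ^ ((m : ℂ) + c)))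
      (∑' m, e m * (p' m * (q : ℂ) ^ ((m : ℂ) + (c - 1)))) q := by
  have hq2 : 0 < q / 2 := by linarith
  have hmem : q ∈ Set.Ioo (q/2) (q+1) := ⟨by linarith, by linarith⟩
  exact hasDerivAt_tsum_of_isPreconnected
    (u := fun m => (Kp' * max ((q/2) ^ (c-1).re) ((q+1) ^ (c-1).re)) *
      (‖e m‖ * ((m : ℝ) + 1) ^ 2 * (q+1) ^ m))
    (((He (q+1) (by linarith)).mul_left _)) isOpen_Ioo (convex_Ioo _ _).isPreconnected
    (fun m y hy => by
      have hy0 : 0 < y := lt_trans hq2 hy.1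
      have hd := (hasDerivAt_cpow_real ((m : ℂ) + c) hy0).const_mul (e m * p m)
      have hexp : (m : ℂ) + c - 1 = (m : ℂ) + (c - 1) := by ring
      rw [hexp] at hd
      convert hd using 1
      · ext y; ring
      · ext y; ring
      · rw [hrel m]; ring)
    (fun m y hy => bound_shape e p' Kp' hKp' hp' (c-1) hq2 hy m)
    hmem (summable_shape e He p Kp hp c hq) hmem


lemma coeff_le2 (b : ℂ) (m : ℕ) : ‖(m : ℂ) + b‖ ≤ (1 + ‖b‖) * ((m : ℝ) + 1) ^ 2 := by
  have h := coeff_le b m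
  have h0 : (0:ℝ) ≤ (m : ℝ) := Nat.cast_nonneg m
  nlinarith [norm_nonneg b, mul_nonneg h0 (norm_nonneg b), sq_nonneg ((m:ℝ)),
    mul_nonneg (mul_nonneg h0 h0) (norm_nonneg b), mul_nonneg h0 h0]

lemma prod_coeff_le (b b' : ℂ) (m : ℕ) :
    ‖((m : ℂ) + b) * ((m : ℂ) + b')‖ ≤ ((1 + ‖b‖) * (1 + ‖b'‖)) * ((m : ℝ) + 1) ^ 2 := by
  rw [norm_mul]
  have h1 := coeff_le b m
  have h2 := coeff_le b' m
  have h3 : (0:ℝ) ≤ (m:ℝ) + 1 := by positivity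
  calc ‖(m : ℂ) + b‖ * ‖(m : ℂ) + b'‖ ≤ (((m:ℝ)+1) * (1 + ‖b‖)) * (((m:ℝ)+1) * (1 + ‖b'‖)) := by
        apply mul_le_mul h1 h2 (norm_nonneg _) (by positivity)
    _ = ((1 + ‖b‖) * (1 + ‖b'‖)) * ((m : ℝ) + 1) ^ 2 := by ring

noncomputable def FF (e : ℕ → ℂ) (a : ℂ) (q : ℝ) : ℂ :=
  ∑' m : ℕ, e m * ((q : ℂ) ^ ((m : ℂ) + a))

noncomputable def FF1 (e : ℕ → ℂ) (a : ℂ) (q : ℝ) : ℂ :=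
  ∑' m : ℕ, e m * (((m : ℂ) + a) * (q : ℂ) ^ ((m : ℂ) + (a - 1)))

noncomputable def FF2 (e : ℕ → ℂ) (a : ℂ) (q : ℝ) : ℂ :=
  ∑' m : ℕ, e m * ((((m : ℂ) + a) * ((m : ℂ) + (a - 1))) * (q : ℂ) ^ ((m : ℂ) + (a - 2)))

section ODE
variable (z : ℝ) (w₁ w₂ a α : ℂ) (e : ℕ → ℂ)

theorem FF_ode (hz : 0 < z)
    (hA : ((z : ℂ) * a - w₁) * ((z : ℂ) * a - w₂) = 0)
    (hB : 2 * (z : ℂ) * a - (w₁ + w₂) = (z : ℂ) * α)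
    (He : ∀ R : ℝ, 0 ≤ R → Summable (fun m : ℕ => ‖e m‖ * ((m : ℝ) + 1) ^ 2 * R ^ m))
    (hrec : ∀ m : ℕ, e (m + 1) * ((z : ℂ) ^ 2 * (((m : ℂ) + 1) * ((m : ℂ) + 1 + α))) = e m)
    {q : ℝ} (hq : 0 < q) :
    (z : ℂ) ^ 2 * (q : ℂ) ^ 2 * FF2 e a q + (z : ℂ) ^ 2 * (q : ℂ) * FF1 e a q -
      (w₁ + w₂) * (z : ℂ) * (q : ℂ) * FF1 e a q + w₁ * w₂ * FF e a q
      = (q : ℂ) * FF e a q := by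
  have hQ : (q : ℂ) ≠ 0 := by exact_mod_cast hq.ne'
  have hsplit : ∀ c d : ℂ, (q : ℂ) ^ (c + d) = (q : ℂ) ^ c * (q : ℂ) ^ d :=
    fun c d => Complex.cpow_add c d hQ
  -- summability instances
  have S0 : Summable (fun m : ℕ => e m * ((q : ℂ) ^ ((m : ℂ) + a))) := by
    have := summable_shape e He (fun _ => 1) 1 (fun m => by
      simp only [norm_one]; nlinarith [Nat.cast_nonneg (α := ℝ) m]) a hq
    simpa only [one_mul] using this
  have S1 : Summable (fun m : ℕ => e m * (((m : ℂ) + a) * (q : ℂ) ^ ((m : ℂ) + (a - 1)))) :=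
    summable_shape e He _ _ (coeff_le2 a) (a - 1) hq
  have S2 : Summable (fun m : ℕ =>
      e m * ((((m : ℂ) + a) * ((m : ℂ) + (a - 1))) * (q : ℂ) ^ ((m : ℂ) + (a - 2)))) :=
    summable_shape e He _ _ (prod_coeff_le a (a - 1)) (a - 2) hq
  have Schi : Summable (fun m : ℕ =>
      e m * (((z : ℂ) ^ 2 * (m : ℂ) * ((m : ℂ) + α)) * (q : ℂ) ^ ((m : ℂ) + a))) := by
    have := summable_shape e He (fun m => ((m : ℂ) + 0) * ((m : ℂ) + α))
      ((1 + ‖(0:ℂ)‖) * (1 + ‖α‖)) (prod_coeff_le 0 α) a hq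
    have h2 := this.mul_left ((z : ℂ) ^ 2)
    apply h2.congr
    intro m; simp only [add_zero]; ring
  -- rewrite each piece
  rw [FF, FF1, FF2, ← tsum_mul_left, ← tsum_mul_left, ← tsum_mul_left, ← tsum_mul_left,
    ← tsum_mul_left]
  rw [← Summable.tsum_add ((S2.mul_left _)) ((S1.mul_left _)),
    ← Summable.tsum_sub (((S2.mul_left _).add (S1.mul_left _))) ((S1.mul_left _)),
    ← Summable.tsum_add ((((S2.mul_left _).add (S1.mul_left _)).sub (S1.mul_left _)))
      ((S0.mul_left _))]
  -- termwise simplification to χ form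
  have hterm : ∀ m : ℕ,
      (z : ℂ) ^ 2 * (q : ℂ) ^ 2 * (e m * ((((m : ℂ) + a) * ((m : ℂ) + (a - 1))) *
          (q : ℂ) ^ ((m : ℂ) + (a - 2)))) +
        (z : ℂ) ^ 2 * (q : ℂ) * (e m * (((m : ℂ) + a) * (q : ℂ) ^ ((m : ℂ) + (a - 1)))) -
        (w₁ + w₂) * (z : ℂ) * (q : ℂ) * (e m * (((m : ℂ) + a) * (q : ℂ) ^ ((m : ℂ) + (a - 1)))) +
        w₁ * w₂ * (e m * ((q : ℂ) ^ ((m : ℂ) + a)))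
      = e m * (((z : ℂ) ^ 2 * (m : ℂ) * ((m : ℂ) + α)) * (q : ℂ) ^ ((m : ℂ) + a)) := by
    intro m
    have e2 : (q : ℂ) ^ ((m : ℂ) + a) = (q : ℂ) ^ ((m : ℂ) + (a - 2)) * ((q : ℂ) * (q : ℂ)) := by
      rw [show (m : ℂ) + a = ((m : ℂ) + (a - 2)) + 1 + 1 by ring, hsplit, hsplit,
        Complex.cpow_one]
      ring
    have e1 : (q : ℂ) ^ ((m : ℂ) + (a - 1)) = (q : ℂ) ^ ((m : ℂ) + (a - 2)) * (q : ℂ) := by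
      rw [show (m : ℂ) + (a - 1) = ((m : ℂ) + (a - 2)) + 1 by ring, hsplit, Complex.cpow_one]
    rw [e2, e1]
    linear_combination (e m * ((q:ℂ) ^ ((m:ℂ) + (a-2)) * (q:ℂ) * (q:ℂ))) * hA +
      (e m * ((q:ℂ) ^ ((m:ℂ) + (a-2)) * (q:ℂ) * (q:ℂ)) * (z : ℂ) * (m : ℂ)) * hB
  rw [tsum_congr hterm]
  -- shift
  rw [Summable.tsum_eq_zero_add Schi]
  have hzero : e 0 * ((z : ℂ) ^ 2 * ((0:ℕ) : ℂ) * (((0:ℕ):ℂ) + α) * (q : ℂ) ^ (((0:ℕ):ℂ) + a)) = 0 := by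
    push_cast
    ring
  rw [hzero, zero_add]
  have hshift : ∀ m : ℕ,
      e (m + 1) * ((z : ℂ) ^ 2 * ((m + 1 : ℕ) : ℂ) * (((m + 1 : ℕ) : ℂ) + α) *
        (q : ℂ) ^ (((m + 1 : ℕ) : ℂ) + a))
      = (q : ℂ) * (e m * ((q : ℂ) ^ ((m : ℂ) + a))) := by
    intro m
    have hc : ((m + 1 : ℕ) : ℂ) = (m : ℂ) + 1 := by push_cast; ring
    rw [hc, show (m : ℂ) + 1 + a = ((m : ℂ) + a) + 1 by ring, hsplit, Complex.cpow_one]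
    calc e (m+1) * ((z : ℂ) ^ 2 * ((m:ℂ) + 1) * (((m:ℂ) + 1) + α) *
          ((q : ℂ) ^ ((m : ℂ) + a) * (q : ℂ)))
        = (e (m + 1) * ((z : ℂ) ^ 2 * (((m : ℂ) + 1) * ((m : ℂ) + 1 + α)))) *
          ((q : ℂ) ^ ((m : ℂ) + a) * (q : ℂ)) := by ring
      _ = e m * ((q : ℂ) ^ ((m : ℂ) + a) * (q : ℂ)) := by rw [hrec m]
      _ = (q : ℂ) * (e m * ((q : ℂ) ^ ((m : ℂ) + a))) := by ring
  exact tsum_congr hshift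


noncomputable def SS (e : ℕ → ℂ) (q : ℝ) : ℂ := ∑' m : ℕ, e m * (q : ℂ) ^ m

noncomputable def TT (e : ℕ → ℂ) (q : ℝ) : ℂ := ∑' m : ℕ, e m * ((m : ℂ) * (q : ℂ) ^ m)

section SSsec
variable (e : ℕ → ℂ)
  (He : ∀ R : ℝ, 0 ≤ R → Summable (fun m : ℕ => ‖e m‖ * ((m : ℝ) + 1) ^ 2 * R ^ m))

include He

lemma summable_SS (q : ℝ) : Summable (fun m : ℕ => e m * (q : ℂ) ^ m) := by
  apply Summable.of_norm_bounded (He |q| (abs_nonneg q))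
  intro m
  rw [norm_mul, norm_pow]
  have h1 : ‖(q:ℂ)‖ = |q| := by rw [Complex.norm_real, Real.norm_eq_abs]
  rw [h1]
  have h2 : (1:ℝ) ≤ ((m:ℝ)+1)^2 := by nlinarith [Nat.cast_nonneg (α := ℝ) m]
  have h3 : (0:ℝ) ≤ |q| ^ m := pow_nonneg (abs_nonneg q) m
  nlinarith [norm_nonneg (e m), mul_nonneg (norm_nonneg (e m)) h3]

lemma summable_TT (q : ℝ) : Summable (fun m : ℕ => e m * ((m : ℂ) * (q : ℂ) ^ m)) := by
  apply Summable.of_norm_bounded (He |q| (abs_nonneg q))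
  intro m
  rw [norm_mul, norm_mul, norm_pow, Complex.norm_natCast]
  have h1 : ‖(q:ℂ)‖ = |q| := by rw [Complex.norm_real, Real.norm_eq_abs]
  rw [h1]
  have h3 : (0:ℝ) ≤ |q| ^ m := pow_nonneg (abs_nonneg q) m
  have h4 : (m:ℝ) ≤ ((m:ℝ)+1)^2 := by nlinarith [Nat.cast_nonneg (α := ℝ) m]
  calc ‖e m‖ * ((m:ℝ) * |q| ^ m) ≤ ‖e m‖ * (((m:ℝ)+1)^2 * |q| ^ m) := by
        apply mul_le_mul_of_nonneg_left _ (norm_nonneg _)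
        exact mul_le_mul_of_nonneg_right h4 h3
    _ = ‖e m‖ * ((m:ℝ)+1)^2 * |q| ^ m := by ring

lemma SS_continuousAt_zero : ContinuousAt (SS e) 0 := by
  have hu := He 1 zero_le_one
  have htu : TendstoUniformlyOn
      (fun (s : Finset ℕ) (q : ℝ) => ∑ m ∈ s, e m * (q : ℂ) ^ m) (SS e) atTop
      (Metric.ball (0:ℝ) 1) := by
    apply tendstoUniformlyOn_tsum hu
    intro m q hq
    rw [norm_mul, norm_pow]
    have h1 : ‖(q:ℂ)‖ = |q| := by rw [Complex.norm_real, Real.norm_eq_abs]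
    rw [h1]
    have hq1 : |q| < 1 := by simpa [Real.dist_eq] using hq
    have h2 : |q| ^ m ≤ 1 := pow_le_one₀ (abs_nonneg q) hq1.le
    have h3 : (1:ℝ) ≤ ((m:ℝ)+1)^2 := by nlinarith [Nat.cast_nonneg (α := ℝ) m]
    have h6 : ‖e m‖ * |q| ^ m ≤ ‖e m‖ * 1 := mul_le_mul_of_nonneg_left h2 (norm_nonneg _)
    rw [one_pow]
    nlinarith [norm_nonneg (e m)]
  have hcont : ContinuousOn (SS e) (Metric.ball (0:ℝ) 1) := by
    apply htu.continuousOn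
    refine Frequently.of_forall fun s => ?_
    exact continuousOn_finset_sum s fun m _ => by fun_prop
  exact hcont.continuousAt (Metric.ball_mem_nhds 0 one_pos)

lemma TT_continuousAt_zero : ContinuousAt (TT e) 0 := by
  have hu := He 1 zero_le_one
  have htu : TendstoUniformlyOn
      (fun (s : Finset ℕ) (q : ℝ) => ∑ m ∈ s, e m * ((m : ℂ) * (q : ℂ) ^ m)) (TT e) atTop
      (Metric.ball (0:ℝ) 1) := by
    apply tendstoUniformlyOn_tsum hu
    intro m q hq
    rw [norm_mul, norm_mul, norm_pow, Complex.norm_natCast]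
    have h1 : ‖(q:ℂ)‖ = |q| := by rw [Complex.norm_real, Real.norm_eq_abs]
    rw [h1]
    have hq1 : |q| < 1 := by simpa [Real.dist_eq] using hq
    have h2 : |q| ^ m ≤ 1 := pow_le_one₀ (abs_nonneg q) hq1.le
    have h4 : (m:ℝ) ≤ ((m:ℝ)+1)^2 := by nlinarith [Nat.cast_nonneg (α := ℝ) m]
    have h0 : (0:ℝ) ≤ (m:ℝ) := Nat.cast_nonneg m
    have h5 : (m:ℝ) * |q| ^ m ≤ ((m:ℝ)+1)^2 := by
      calc (m:ℝ) * |q| ^ m ≤ (m:ℝ) * 1 := mul_le_mul_of_nonneg_left h2 h0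
        _ ≤ ((m:ℝ)+1)^2 := by nlinarith
    calc ‖e m‖ * ((m:ℝ) * |q| ^ m) ≤ ‖e m‖ * ((m:ℝ)+1)^2 :=
          mul_le_mul_of_nonneg_left h5 (norm_nonneg _)
      _ = ‖e m‖ * ((m:ℝ)+1)^2 * 1 ^ m := by rw [one_pow]; ring
  have hcont : ContinuousOn (TT e) (Metric.ball (0:ℝ) 1) := by
    apply htu.continuousOn
    refine Frequently.of_forall fun s => ?_
    exact continuousOn_finset_sum s fun m _ => by fun_prop
  exact hcont.continuousAt (Metric.ball_mem_nhds 0 one_pos)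

omit He in
lemma SS_zero : SS e 0 = e 0 := by
  rw [SS, tsum_eq_single 0]
  · simp
  · intro m hm
    simp [zero_pow hm]

omit He in
lemma TT_zero : TT e 0 = 0 := by
  rw [TT]
  convert tsum_zero with m
  rcases Nat.eq_zero_or_pos m with h | h
  · subst h; simp
  · simp [zero_pow (Nat.pos_iff_ne_zero.mp h)]

end SSsec


section Fsec
variable (e : ℕ → ℂ) (a : ℂ)
  (He : ∀ R : ℝ, 0 ≤ R → Summable (fun m : ℕ => ‖e m‖ * ((m : ℝ) + 1) ^ 2 * R ^ m))

lemma one_le_sq (m : ℕ) : ‖(1:ℂ)‖ ≤ 1 * ((m : ℝ) + 1) ^ 2 := by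
  rw [norm_one, one_mul]
  nlinarith [Nat.cast_nonneg (α := ℝ) m]

include He in
lemma hasDerivAt_FF {q : ℝ} (hq : 0 < q) : HasDerivAt (FF e a) (FF1 e a q) q := by
  have h := hasDerivAt_tsum_shape e He a (fun _ => 1) (fun m => (m : ℂ) + a) 1 (1 + ‖a‖)
    zero_le_one (by positivity) one_le_sq (coeff_le2 a) (fun m => (one_mul _).symm) hq
  have hfn : (fun y : ℝ => ∑' m, e m * ((1:ℂ) * (y : ℂ) ^ ((m : ℂ) + a))) = FF e a := by
    funext y
    exact tsum_congr fun m => by rw [one_mul]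
  rw [hfn] at h
  exact h

include He in
lemma hasDerivAt_FF1 {q : ℝ} (hq : 0 < q) : HasDerivAt (FF1 e a) (FF2 e a q) q := by
  have h := hasDerivAt_tsum_shape e He (a - 1) (fun m => (m : ℂ) + a)
    (fun m => ((m : ℂ) + a) * ((m : ℂ) + (a - 1))) (1 + ‖a‖) ((1 + ‖a‖) * (1 + ‖a - 1‖))
    (by positivity) (by positivity) (coeff_le2 a) (prod_coeff_le a (a - 1))
    (fun m => rfl) hq
  have hexp : a - 1 - 1 = a - 2 := by ring
  rw [hexp] at h
  exact h

lemma FF_factor {q : ℝ} (hq : 0 < q) : FF e a q = (q : ℂ) ^ a * SS e q := by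
  have hQ : (q : ℂ) ≠ 0 := by exact_mod_cast hq.ne'
  rw [FF, SS, ← tsum_mul_left]
  apply tsum_congr
  intro m
  rw [Complex.cpow_add _ _ hQ, Complex.cpow_natCast]
  ring

include He in
lemma FF1_factor {q : ℝ} (hq : 0 < q) :
    FF1 e a q = (q : ℂ) ^ (a - 1) * (TT e q + a * SS e q) := by
  have hQ : (q : ℂ) ≠ 0 := by exact_mod_cast hq.ne'
  rw [FF1, TT, SS, ← tsum_mul_left (a := a), ← Summable.tsum_add (summable_TT e He q)
    ((summable_SS e He q).mul_left a), ← tsum_mul_left]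
  apply tsum_congr
  intro m
  rw [show (m : ℂ) + (a - 1) = (a - 1) + (m : ℂ) by ring, Complex.cpow_add _ _ hQ,
    Complex.cpow_natCast]
  ring
end Fsec


theorem ode_unique (z : ℝ) (hz : 0 < z) (w₁ w₂ : ℂ)
    (X X' X'' Y Y' Y'' : ℝ → ℂ)
    (hX : ∀ t : ℝ, 0 < t → HasDerivAt X (X' t) t)
    (hX' : ∀ t : ℝ, 0 < t → HasDerivAt X' (X'' t) t)
    (hY : ∀ t : ℝ, 0 < t → HasDerivAt Y (Y' t) t)
    (hY' : ∀ t : ℝ, 0 < t → HasDerivAt Y' (Y'' t) t)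
    (hodeX : ∀ t : ℝ, 0 < t →
      (z : ℂ) ^ 2 * (t : ℂ) ^ 2 * X'' t + (z : ℂ) ^ 2 * (t : ℂ) * X' t -
        (w₁ + w₂) * (z : ℂ) * (t : ℂ) * X' t + w₁ * w₂ * X t = (t : ℂ) * X t)
    (hodeY : ∀ t : ℝ, 0 < t →
      (z : ℂ) ^ 2 * (t : ℂ) ^ 2 * Y'' t + (z : ℂ) ^ 2 * (t : ℂ) * Y' t -
        (w₁ + w₂) * (z : ℂ) * (t : ℂ) * Y' t + w₁ * w₂ * Y t = (t : ℂ) * Y t)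
    (q₀ : ℝ) (hq₀ : 0 < q₀) (h0 : X q₀ = Y q₀) (h1 : X' q₀ = Y' q₀) :
    ∀ q : ℝ, 0 < q → X q = Y q := by
  intro q hq
  set aa : ℝ := min q q₀ / 2 with haa_def
  set bb : ℝ := max q q₀ + 1 with hbb_def
  have haa : 0 < aa := by
    have := lt_min hq hq₀
    simp only [haa_def]
    linarith
  have hq_mem : q ∈ Ioo aa bb := by
    constructor
    · have h := min_le_left q q₀
      simp only [haa_def]; linarith
    · have h := le_max_left q q₀
      simp only [hbb_def]; linarith
  have hq₀_mem : q₀ ∈ Ioo aa bb := by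
    constructor
    · have h := min_le_right q q₀
      simp only [haa_def]; linarith
    · have h := le_max_right q q₀
      simp only [hbb_def]; linarith
  have haabb : aa < bb := lt_trans hq_mem.1 hq_mem.2
  -- the clamped vector field
  set τ : ℝ → ℝ := fun t => max aa (min t bb) with hτ_def
  have hτ_mem : ∀ t, aa ≤ τ t ∧ τ t ≤ bb := fun t =>
    ⟨le_max_left _ _, max_le haabb.le (min_le_right _ _)⟩
  have hτ_eq : ∀ t ∈ Ioo aa bb, τ t = t := by
    intro t ht
    simp only [hτ_def]
    rw [min_eq_left ht.2.le, max_eq_right ht.1.le]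
  set A : ℝ → ℂ := fun t => ((τ t : ℂ) - w₁ * w₂) / ((z : ℂ) ^ 2 * (τ t : ℂ) ^ 2) with hA_def
  set B : ℝ → ℂ := fun t => ((w₁ + w₂) - (z : ℂ)) / ((z : ℂ) * (τ t : ℂ)) with hB_def
  set v : ℝ → ℂ × ℂ → ℂ × ℂ := fun t x => (x.2, A t * x.1 + B t * x.2) with hv_def
  set MA : ℝ := (bb + ‖w₁ * w₂‖) / (z ^ 2 * aa ^ 2) with hMA_def
  set MB : ℝ := ‖(w₁ + w₂) - (z : ℂ)‖ / (z * aa) with hMB_def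
  have hMA_pos : 0 ≤ MA := by
    apply div_nonneg _ (by positivity)
    have : 0 < bb := lt_trans haa haabb
    positivity
  have hMB_pos : 0 ≤ MB := by positivity
  have hAbound : ∀ t, ‖A t‖ ≤ MA := by
    intro t
    have h1 := (hτ_mem t).1
    have h2 := (hτ_mem t).2
    have hτpos : 0 < τ t := lt_of_lt_of_le haa h1
    rw [hA_def]
    simp only
    rw [norm_div]
    have hden : ‖(z : ℂ) ^ 2 * (τ t : ℂ) ^ 2‖ = z ^ 2 * (τ t) ^ 2 := by
      rw [norm_mul, norm_pow, norm_pow, Complex.norm_real, Complex.norm_real,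
        Real.norm_eq_abs, Real.norm_eq_abs, abs_of_pos hz, abs_of_pos hτpos]
    rw [hden, hMA_def]
    apply div_le_div₀ (by positivity)
    · calc ‖(τ t : ℂ) - w₁ * w₂‖ ≤ ‖((τ t : ℝ) : ℂ)‖ + ‖w₁ * w₂‖ := norm_sub_le _ _
        _ ≤ bb + ‖w₁ * w₂‖ := by
            rw [Complex.norm_real, Real.norm_eq_abs, abs_of_pos hτpos]
            linarith
    · positivity
    · apply mul_le_mul le_rfl _ (by positivity) (by positivity)
      apply pow_le_pow_left₀ haa.le h1
  have hBbound : ∀ t, ‖B t‖ ≤ MB := by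
    intro t
    have h1 := (hτ_mem t).1
    have hτpos : 0 < τ t := lt_of_lt_of_le haa h1
    rw [hB_def]
    simp only
    rw [norm_div]
    have hden : ‖(z : ℂ) * (τ t : ℂ)‖ = z * τ t := by
      rw [norm_mul, Complex.norm_real, Complex.norm_real, Real.norm_eq_abs,
        Real.norm_eq_abs, abs_of_pos hz, abs_of_pos hτpos]
    rw [hden, hMB_def]
    apply div_le_div₀ (norm_nonneg _) le_rfl (by positivity)
    apply mul_le_mul le_rfl h1 haa.le hz.le
  set K : NNReal := Real.toNNReal (1 + MA + MB) with hK_def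
  have hK_coe : (K : ℝ) = 1 + MA + MB := Real.coe_toNNReal _ (by linarith)
  have hv : ∀ t, LipschitzOnWith K (v t) univ := by
    intro t
    apply LipschitzOnWith.of_dist_le_mul
    intro x _ y _
    rw [Prod.dist_eq, hK_coe]
    have hd1 : dist x.1 y.1 ≤ dist x y := by rw [Prod.dist_eq]; exact le_max_left _ _
    have hd2 : dist x.2 y.2 ≤ dist x y := by rw [Prod.dist_eq]; exact le_max_right _ _
    simp only [hv_def]
    apply max_le
    · calc dist x.2 y.2 ≤ dist x y := hd2
        _ ≤ (1 + MA + MB) * dist x y := by nlinarith [dist_nonneg (x := x) (y := y)]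
    · rw [dist_eq_norm]
      have : A t * x.1 + B t * x.2 - (A t * y.1 + B t * y.2)
          = A t * (x.1 - y.1) + B t * (x.2 - y.2) := by ring
      rw [this]
      calc ‖A t * (x.1 - y.1) + B t * (x.2 - y.2)‖
          ≤ ‖A t‖ * ‖x.1 - y.1‖ + ‖B t‖ * ‖x.2 - y.2‖ := by
            refine le_trans (norm_add_le _ _) ?_
            rw [norm_mul, norm_mul]
        _ ≤ MA * dist x y + MB * dist x y := by
            rw [← dist_eq_norm, ← dist_eq_norm]
            apply add_le_add
            · exact mul_le_mul (hAbound t) hd1 dist_nonneg hMA_pos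
            · exact mul_le_mul (hBbound t) hd2 dist_nonneg hMB_pos
        _ ≤ (1 + MA + MB) * dist x y := by nlinarith [dist_nonneg (x := x) (y := y)]
  -- solutions
  have hsol : ∀ (W W' W'' : ℝ → ℂ),
      (∀ t : ℝ, 0 < t → HasDerivAt W (W' t) t) →
      (∀ t : ℝ, 0 < t → HasDerivAt W' (W'' t) t) →
      (∀ t : ℝ, 0 < t →
        (z : ℂ) ^ 2 * (t : ℂ) ^ 2 * W'' t + (z : ℂ) ^ 2 * (t : ℂ) * W' t -
          (w₁ + w₂) * (z : ℂ) * (t : ℂ) * W' t + w₁ * w₂ * W t = (t : ℂ) * W t) →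
      ∀ t ∈ Ioo aa bb, HasDerivAt (fun u => (W u, W' u)) (v t (W t, W' t)) t ∧
        (W t, W' t) ∈ univ := by
    intro W W' W'' hW hW' hode t ht
    have htpos : 0 < t := lt_trans haa ht.1
    refine ⟨?_, mem_univ _⟩
    have hd := (hW t htpos).prodMk (hW' t htpos)
    have hval : (W' t, W'' t) = v t (W t, W' t) := by
      simp only [hv_def]
      refine Prod.ext rfl ?_
      simp only
      rw [hA_def, hB_def]
      simp only
      rw [hτ_eq t ht]
      have hzC : (z : ℂ) ≠ 0 := by exact_mod_cast hz.ne'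
      have htC : (t : ℂ) ≠ 0 := by exact_mod_cast htpos.ne'
      field_simp
      linear_combination hode t htpos
    rw [← hval]
    exact hd
  have key := ODE_solution_unique_of_mem_Ioo (fun t _ => hv t) hq₀_mem
    (hsol X X' X'' hX hX' hodeX) (hsol Y Y' Y'' hY hY' hodeY)
    (by rw [h0, h1])
  have := key hq_mem
  exact congrArg Prod.fst this


lemma bessel_eq (α : ℂ) {z q : ℝ} (hz : 0 < z) (hq : 0 < q) :
    besselI α (2 * Real.sqrt q / z) =
      (q : ℂ) ^ (α / 2) * (z : ℂ) ^ (-α) *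
        SS (fun m => bc α m * (((z : ℂ) ^ 2)⁻¹) ^ m) q := by
  have hr : 0 < Real.sqrt q / z := div_pos (Real.sqrt_pos.mpr hq) hz
  have hrC : ((Real.sqrt q / z : ℝ) : ℂ) ≠ 0 := by exact_mod_cast hr.ne'
  rw [besselI, SS, ← tsum_mul_left]
  apply tsum_congr
  intro m
  have hx2 : ((2 * Real.sqrt q / z : ℝ) : ℂ) / 2 = ((Real.sqrt q / z : ℝ) : ℂ) := by
    push_cast; ring
  rw [hx2]
  have hsplit : ((Real.sqrt q / z : ℝ) : ℂ) ^ (2 * (m : ℂ) + α) =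
      ((Real.sqrt q / z : ℝ) : ℂ) ^ (2 * m : ℕ) * ((Real.sqrt q / z : ℝ) : ℂ) ^ α := by
    rw [show 2 * (m : ℂ) + α = ((2 * m : ℕ) : ℂ) + α by push_cast; ring,
      Complex.cpow_add _ _ hrC, Complex.cpow_natCast]
  rw [hsplit]
  have hsq : ((Real.sqrt q / z : ℝ) : ℂ) ^ (2 * m : ℕ) =
      ((q : ℂ) * ((z : ℂ) ^ 2)⁻¹) ^ m := by
    rw [pow_mul]
    congr 1
    rw [← Complex.ofReal_pow]
    have : (Real.sqrt q / z) ^ 2 = q / z ^ 2 := by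
      rw [div_pow, Real.sq_sqrt hq.le]
    rw [this]
    push_cast [div_eq_mul_inv]
    ring
  rw [hsq]
  have hcpowα : ((Real.sqrt q / z : ℝ) : ℂ) ^ α = (q : ℂ) ^ (α / 2) * (z : ℂ) ^ (-α) := by
    rw [show Real.sqrt q / z = Real.sqrt q * z⁻¹ by ring, Complex.ofReal_mul,
      Complex.mul_cpow_ofReal_nonneg (Real.sqrt_nonneg q) (inv_nonneg.mpr hz.le)]
    congr 1
    · have h1 : ((Real.sqrt q : ℝ) : ℂ) = (q : ℂ) ^ ((1:ℂ)/2) := by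
        rw [Real.sqrt_eq_rpow, Complex.ofReal_cpow hq.le]
        norm_num
      have him : (Complex.log ((q:ℝ):ℂ) * ((1:ℂ)/2)).im = 0 := by
        rw [← Complex.ofReal_log hq.le]
        simp [Complex.mul_im]
      rw [h1, ← Complex.cpow_mul]
      · rw [show (1:ℂ)/2 * α = α / 2 by ring]
      · rw [him]; linarith [Real.pi_pos]
      · rw [him]; exact Real.pi_pos.le
    · rw [Complex.ofReal_inv, Complex.inv_cpow _ _ (by
        rw [Complex.arg_ofReal_of_nonneg hz.le]; exact (ne_of_lt Real.pi_pos)),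
        ← Complex.cpow_neg]
  rw [hcpowα, bc]
  rw [mul_pow]
  ring

/-- When `ν = (w₁−w₂)/z` is not an integer, every solution of the equivariant quantum
differential equation of ℙ¹ is a combination of the two modified Bessel solutions. -/
theorem qde_solution_eq_bessel_combination (z : ℝ) (hz : 0 < z) (w₁ w₂ ν : ℂ)
    (hν : ν = (w₁ - w₂) / (z : ℂ)) (hnint : ∀ n : ℤ, ν ≠ (n : ℂ))
    (Ifun : ℝ → ℂ)
    (hI₁ : ∀ q ∈ Set.Ioi (0 : ℝ), DifferentiableAt ℝ Ifun q)
    (hI₂ : ∀ q ∈ Set.Ioi (0 : ℝ), DifferentiableAt ℝ (deriv Ifun) q)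
    (hqde : ∀ q : ℝ, 0 < q →
      (z : ℂ) ^ 2 * (q : ℂ) ^ 2 * deriv (deriv Ifun) q +
        (z : ℂ) ^ 2 * (q : ℂ) * deriv Ifun q -
        (w₁ + w₂) * (z : ℂ) * (q : ℂ) * deriv Ifun q +
        w₁ * w₂ * Ifun q = (q : ℂ) * Ifun q) :
    ∃ c₁ c₂ : ℂ, ∀ q : ℝ, 0 < q →
      Ifun q = (q : ℂ) ^ ((w₁ + w₂) / (2 * (z : ℂ))) *
        (c₁ * besselI ν (2 * Real.sqrt q / z) + c₂ * besselI (-ν) (2 * Real.sqrt q / z)) := by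
  have hzC : (z : ℂ) ≠ 0 := by exact_mod_cast hz.ne'
  have hν0 : ν ≠ 0 := by simpa using hnint 0
  have hα₁ : ∀ n : ℤ, ν ≠ (n : ℂ) := hnint
  have hα₂ : ∀ n : ℤ, -ν ≠ (n : ℂ) := fun n h => hnint (-n) (by push_cast; linear_combination -h)
  obtain ⟨a₁, ha₁_def⟩ : ∃ x : ℂ, x = w₁ / (z : ℂ) := ⟨_, rfl⟩
  obtain ⟨a₂, ha₂_def⟩ : ∃ x : ℂ, x = w₂ / (z : ℂ) := ⟨_, rfl⟩
  obtain ⟨e₁, he₁_def⟩ : ∃ f : ℕ → ℂ, f = fun m => bc ν m * (((z : ℂ) ^ 2)⁻¹) ^ m := ⟨_, rfl⟩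
  obtain ⟨e₂, he₂_def⟩ : ∃ f : ℕ → ℂ, f = fun m => bc (-ν) m * (((z : ℂ) ^ 2)⁻¹) ^ m := ⟨_, rfl⟩
  have hw : ((z : ℂ) ^ 2)⁻¹ * (z : ℂ) ^ 2 = 1 := inv_mul_cancel₀ (pow_ne_zero 2 hzC)
  -- summability hypotheses
  have Hegen : ∀ (α : ℂ), (∀ n : ℤ, α ≠ (n : ℂ)) → ∀ R : ℝ, 0 ≤ R →
      Summable (fun m : ℕ => ‖bc α m * (((z : ℂ) ^ 2)⁻¹) ^ m‖ * ((m : ℝ) + 1) ^ 2 * R ^ m) := by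
    intro α hα R hR
    have h := bc_summable (bc_rec hα) (‖((z : ℂ) ^ 2)⁻¹‖ * R)
      (mul_nonneg (norm_nonneg _) hR)
    apply h.congr
    intro m
    rw [norm_mul, norm_pow, mul_pow]
    ring
  have He₁ : ∀ R : ℝ, 0 ≤ R →
      Summable (fun m : ℕ => ‖e₁ m‖ * ((m : ℝ) + 1) ^ 2 * R ^ m) := by
    simp only [he₁_def]; exact Hegen ν hα₁
  have He₂ : ∀ R : ℝ, 0 ≤ R →
      Summable (fun m : ℕ => ‖e₂ m‖ * ((m : ℝ) + 1) ^ 2 * R ^ m) := by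
    simp only [he₂_def]; exact Hegen (-ν) hα₂
  -- recurrences
  have hrecgen : ∀ (α : ℂ), (∀ n : ℤ, α ≠ (n : ℂ)) → ∀ m : ℕ,
      (bc α (m+1) * (((z : ℂ) ^ 2)⁻¹) ^ (m+1)) * ((z : ℂ) ^ 2 * (((m : ℂ) + 1) *
        ((m : ℂ) + 1 + α))) = bc α m * (((z : ℂ) ^ 2)⁻¹) ^ m := by
    intro α hα m
    have h := bc_rec hα m
    rw [pow_succ]
    calc (bc α (m+1) * ((((z : ℂ) ^ 2)⁻¹) ^ m * ((z : ℂ) ^ 2)⁻¹)) * ((z : ℂ) ^ 2 *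
          (((m : ℂ) + 1) * ((m : ℂ) + 1 + α)))
        = (((m : ℂ) + 1) * ((m : ℂ) + α + 1) * bc α (m+1)) * ((((z : ℂ) ^ 2)⁻¹) ^ m) *
          (((z : ℂ) ^ 2)⁻¹ * (z : ℂ) ^ 2) := by ring
      _ = bc α m * (((z : ℂ) ^ 2)⁻¹) ^ m := by rw [hw, mul_one, ← h]
  have hrec₁ : ∀ m : ℕ, e₁ (m + 1) * ((z : ℂ) ^ 2 * (((m : ℂ) + 1) * ((m : ℂ) + 1 + ν))) =
      e₁ m := by simp only [he₁_def]; exact fun m => hrecgen ν hα₁ m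
  have hrec₂ : ∀ m : ℕ, e₂ (m + 1) * ((z : ℂ) ^ 2 * (((m : ℂ) + 1) * ((m : ℂ) + 1 + (-ν)))) =
      e₂ m := by simp only [he₂_def]; exact fun m => hrecgen (-ν) hα₂ m
  -- indicial hypotheses
  have hza₁ : (z : ℂ) * a₁ = w₁ := by rw [ha₁_def]; field_simp
  have hza₂ : (z : ℂ) * a₂ = w₂ := by rw [ha₂_def]; field_simp
  have hzν : (z : ℂ) * ν = w₁ - w₂ := by rw [hν]; field_simp
  have hA₁ : ((z : ℂ) * a₁ - w₁) * ((z : ℂ) * a₁ - w₂) = 0 := by rw [hza₁]; ring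
  have hA₂ : ((z : ℂ) * a₂ - w₁) * ((z : ℂ) * a₂ - w₂) = 0 := by rw [hza₂]; ring
  have hB₁ : 2 * (z : ℂ) * a₁ - (w₁ + w₂) = (z : ℂ) * ν := by
    rw [hzν]; linear_combination 2 * hza₁
  have hB₂ : 2 * (z : ℂ) * a₂ - (w₁ + w₂) = (z : ℂ) * (-ν) := by
    have : (z : ℂ) * (-ν) = w₂ - w₁ := by rw [mul_neg, hzν]; ring
    rw [this]; linear_combination 2 * hza₂
  -- find q₀ with nonzero Wronskian
  obtain ⟨hfun, hfun_def⟩ : ∃ f : ℝ → ℂ, f = fun q => SS e₁ q * (TT e₂ q + a₂ * SS e₂ q) -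
    (TT e₁ q + a₁ * SS e₁ q) * SS e₂ q := ⟨_, rfl⟩
  have hcont : ContinuousAt hfun 0 := by
    rw [hfun_def]
    apply ContinuousAt.sub
    · exact (SS_continuousAt_zero e₁ He₁).mul
        ((TT_continuousAt_zero e₂ He₂).add (continuousAt_const.mul (SS_continuousAt_zero e₂ He₂)))
    · exact ((TT_continuousAt_zero e₁ He₁).add
        (continuousAt_const.mul (SS_continuousAt_zero e₁ He₁))).mul (SS_continuousAt_zero e₂ He₂)
  have ha21 : a₂ - a₁ = -ν := by
    rw [ha₁_def, ha₂_def, hν]; ring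
  have hval : hfun 0 ≠ 0 := by
    simp only [hfun_def]
    rw [SS_zero, SS_zero, TT_zero, TT_zero]
    have h1 : e₁ 0 = bc ν 0 := by simp [he₁_def]
    have h2 : e₂ 0 = bc (-ν) 0 := by simp [he₂_def]
    rw [h1, h2]
    have : bc ν 0 * (0 + a₂ * bc (-ν) 0) - (0 + a₁ * bc ν 0) * bc (-ν) 0
        = bc ν 0 * bc (-ν) 0 * (a₂ - a₁) := by ring
    rw [this, ha21]
    exact mul_ne_zero (mul_ne_zero (bc_ne hα₁ 0) (bc_ne hα₂ 0)) (neg_ne_zero.mpr hν0)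
  have hev : ∀ᶠ x in nhds (0:ℝ), hfun x ≠ 0 := hcont.eventually_ne hval
  rcases Metric.eventually_nhds_iff.mp hev with ⟨ε, hε, hball⟩
  set q₀ : ℝ := ε / 2 with hq₀_def
  have hq₀ : 0 < q₀ := by rw [hq₀_def]; linarith
  have hQ₀ : (q₀ : ℂ) ≠ 0 := by exact_mod_cast hq₀.ne'
  have hfq₀ : hfun q₀ ≠ 0 := by
    apply hball
    rw [Real.dist_eq, sub_zero, abs_of_pos hq₀, hq₀_def]
    linarith
  have hpow_ne : ∀ s : ℂ, (q₀ : ℂ) ^ s ≠ 0 := fun s h =>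
    hQ₀ ((Complex.cpow_eq_zero_iff _ _).mp h).1
  -- Wronskian
  obtain ⟨W, hW_def⟩ : ∃ x : ℂ, x = FF e₁ a₁ q₀ * FF1 e₂ a₂ q₀ - FF1 e₁ a₁ q₀ * FF e₂ a₂ q₀ :=
    ⟨_, rfl⟩
  have hWne : W ≠ 0 := by
    rw [hW_def]
    rw [FF_factor e₁ a₁ hq₀, FF_factor e₂ a₂ hq₀, FF1_factor e₁ a₁ He₁ hq₀,
      FF1_factor e₂ a₂ He₂ hq₀]
    have hcalc : (q₀ : ℂ) ^ a₁ * SS e₁ q₀ * ((q₀ : ℂ) ^ (a₂ - 1) * (TT e₂ q₀ + a₂ * SS e₂ q₀)) -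
        (q₀ : ℂ) ^ (a₁ - 1) * (TT e₁ q₀ + a₁ * SS e₁ q₀) * ((q₀ : ℂ) ^ a₂ * SS e₂ q₀)
        = (q₀ : ℂ) ^ (a₁ + (a₂ - 1)) * hfun q₀ := by
      rw [Complex.cpow_add _ _ hQ₀]
      simp only [hfun_def]
      have h2 : (q₀ : ℂ) ^ (a₁ - 1) * (q₀ : ℂ) ^ a₂ = (q₀ : ℂ) ^ a₁ * (q₀ : ℂ) ^ (a₂ - 1) := by
        rw [← Complex.cpow_add _ _ hQ₀, ← Complex.cpow_add _ _ hQ₀]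
        congr 1
        ring
      linear_combination -((TT e₁ q₀ + a₁ * SS e₁ q₀) * SS e₂ q₀) * h2
    rw [hcalc]
    exact mul_ne_zero (hpow_ne _) hfq₀
  -- constants
  obtain ⟨C₁, hC₁_def⟩ : ∃ x : ℂ, x = (Ifun q₀ * FF1 e₂ a₂ q₀ - deriv Ifun q₀ * FF e₂ a₂ q₀) / W :=
    ⟨_, rfl⟩
  obtain ⟨C₂, hC₂_def⟩ : ∃ x : ℂ, x = (deriv Ifun q₀ * FF e₁ a₁ q₀ - Ifun q₀ * FF1 e₁ a₁ q₀) / W :=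
    ⟨_, rfl⟩
  obtain ⟨G, hG_def⟩ : ∃ f : ℝ → ℂ, f = fun t => C₁ * FF e₁ a₁ t + C₂ * FF e₂ a₂ t := ⟨_, rfl⟩
  obtain ⟨G1, hG1_def⟩ : ∃ f : ℝ → ℂ, f = fun t => C₁ * FF1 e₁ a₁ t + C₂ * FF1 e₂ a₂ t := ⟨_, rfl⟩
  obtain ⟨G2, hG2_def⟩ : ∃ f : ℝ → ℂ, f = fun t => C₁ * FF2 e₁ a₁ t + C₂ * FF2 e₂ a₂ t := ⟨_, rfl⟩
  have hGd : ∀ t : ℝ, 0 < t → HasDerivAt G (G1 t) t := by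
    intro t ht
    rw [hG_def, hG1_def]
    exact ((hasDerivAt_FF e₁ a₁ He₁ ht).const_mul C₁).add
      ((hasDerivAt_FF e₂ a₂ He₂ ht).const_mul C₂)
  have hG1d : ∀ t : ℝ, 0 < t → HasDerivAt G1 (G2 t) t := by
    intro t ht
    rw [hG1_def, hG2_def]
    exact ((hasDerivAt_FF1 e₁ a₁ He₁ ht).const_mul C₁).add
      ((hasDerivAt_FF1 e₂ a₂ He₂ ht).const_mul C₂)
  have hodeG : ∀ t : ℝ, 0 < t →
      (z : ℂ) ^ 2 * (t : ℂ) ^ 2 * G2 t + (z : ℂ) ^ 2 * (t : ℂ) * G1 t -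
        (w₁ + w₂) * (z : ℂ) * (t : ℂ) * G1 t + w₁ * w₂ * G t = (t : ℂ) * G t := by
    intro t ht
    have h1 := FF_ode z w₁ w₂ a₁ ν e₁ hz hA₁ hB₁ He₁ hrec₁ ht
    have h2 := FF_ode z w₁ w₂ a₂ (-ν) e₂ hz hA₂ hB₂ He₂ hrec₂ ht
    simp only [hG_def, hG1_def, hG2_def]
    linear_combination C₁ * h1 + C₂ * h2
  have h0 : Ifun q₀ = G q₀ := by
    simp only [hG_def]
    rw [hC₁_def, hC₂_def, div_mul_eq_mul_div, div_mul_eq_mul_div, ← add_div,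
      eq_div_iff hWne, hW_def]
    ring
  have h1 : deriv Ifun q₀ = G1 q₀ := by
    simp only [hG1_def]
    rw [hC₁_def, hC₂_def, div_mul_eq_mul_div, div_mul_eq_mul_div, ← add_div,
      eq_div_iff hWne, hW_def]
    ring
  -- uniqueness
  have hIG : ∀ q : ℝ, 0 < q → Ifun q = G q := by
    apply ode_unique z hz w₁ w₂ Ifun (deriv Ifun) (deriv (deriv Ifun)) G G1 G2
      (fun t ht => (hI₁ t ht).hasDerivAt) (fun t ht => (hI₂ t ht).hasDerivAt)
      hGd hG1d hqde hodeG q₀ hq₀ h0 h1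
  -- final form
  refine ⟨C₁ * (z : ℂ) ^ ν, C₂ * (z : ℂ) ^ (-ν), ?_⟩
  intro q hq
  have hQ : (q : ℂ) ≠ 0 := by exact_mod_cast hq.ne'
  rw [hIG q hq]
  simp only [hG_def]
  rw [FF_factor e₁ a₁ hq, FF_factor e₂ a₂ hq, bessel_eq ν hz hq, bessel_eq (-ν) hz hq,
    ← he₁_def, ← he₂_def]
  have hz1 : (z : ℂ) ^ ν * (z : ℂ) ^ (-ν) = 1 := by
    rw [← Complex.cpow_add _ _ hzC]; simp
  have hz2 : (z : ℂ) ^ (-ν) * (z : ℂ) ^ (-(-ν)) = 1 := by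
    rw [← Complex.cpow_add _ _ hzC]; simp
  have hq1 : (q : ℂ) ^ ((w₁ + w₂) / (2 * (z : ℂ))) * (q : ℂ) ^ (ν / 2) = (q : ℂ) ^ a₁ := by
    rw [← Complex.cpow_add _ _ hQ]
    congr 1
    rw [ha₁_def, hν]
    field_simp
    ring
  have hq2 : (q : ℂ) ^ ((w₁ + w₂) / (2 * (z : ℂ))) * (q : ℂ) ^ (-ν / 2) = (q : ℂ) ^ a₂ := by
    rw [← Complex.cpow_add _ _ hQ]
    congr 1
    rw [ha₂_def, hν]
    field_simp
    ring
  linear_combination -(C₁ * SS e₁ q) * ((q : ℂ) ^ ((w₁ + w₂) / (2 * (z : ℂ))) *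
      (q : ℂ) ^ (ν / 2) * hz1) - (C₁ * SS e₁ q) * hq1 -
    (C₂ * SS e₂ q) * ((q : ℂ) ^ ((w₁ + w₂) / (2 * (z : ℂ))) * (q : ℂ) ^ (-ν / 2) * hz2) -
    (C₂ * SS e₂ q) * hq2
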